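/- The function g(z) = −1/(z² log(e/|z|)) + 1/(2 z² log²(e/|z|)), which equals the Wirtinger derivative ∂f/∂z of f(z) = 1/(z log(e/|z|)) on the punctured unit disc, is not Lebesgue integrable on any punctured neighbourhood of the origin: for every r ∈ (0,1), ∫_{0<|z|<r} |g(z)| dA(z) = ∞. -/

import Mathlib

open scoped ENNReal NNReal


open Complex

noncomputable section

/-- `log(e/|z|) = 1 − log|z|`. -/
def Lg (z : ℂ) : ℝ := 1 - Real.log (‖z‖)

/-- The function `f(z) = 1/(z log(e/|z|))`. -/
def fEx (z : ℂ) : ℂ := (z * (Lg z : ℝ))⁻¹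

open MeasureTheory

/-- The function `g(z) = −1/(z² log(e/|z|)) + 1/(2 z² log²(e/|z|))`. -/
def gEx (z : ℂ) : ℂ := -(z ^ 2 * (Lg z : ℝ))⁻¹ + ((2 : ℂ) * z ^ 2 * ((Lg z ^ 2 : ℝ) : ℂ))⁻¹

lemma hasFDerivAt_fEx (z : ℂ) (h0 : z ≠ 0) (hL : z * ((Lg z : ℝ) : ℂ) ≠ 0) :
    HasFDerivAt fEx
      ((-((z * ((Lg z : ℝ):ℂ)) ^ 2)⁻¹) •
        (z • (Complex.ofRealCLM.comp
            (-((((1:ℝ)/2) * (‖z‖^2)⁻¹) • (2 • (innerSL ℝ z)))))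
          + ((Lg z : ℝ):ℂ) • (ContinuousLinearMap.id ℝ ℂ))) z := by
  have h1 : HasFDerivAt (fun w : ℂ => ‖w‖^2) (2 • (innerSL ℝ z)) z :=
    (hasStrictFDerivAt_norm_sq z).hasFDerivAt
  have hne : ‖z‖^2 ≠ 0 := pow_ne_zero 2 (norm_ne_zero_iff.2 h0)
  have h2 : HasFDerivAt (fun w : ℂ => Real.log (‖w‖^2))
      ((‖z‖^2)⁻¹ • (2 • (innerSL ℝ z))) z :=
    by have := (Real.hasDerivAt_log hne).comp_hasFDerivAt z h1; exact this
  have h3 : HasFDerivAt (fun w : ℂ => Real.log (‖w‖))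
      ((((1:ℝ)/2) * (‖z‖^2)⁻¹) • (2 • (innerSL ℝ z))) z := by
    have h3' : HasFDerivAt (fun w : ℂ => ((1:ℝ)/2) * Real.log (‖w‖^2))
        ((((1:ℝ)/2) * (‖z‖^2)⁻¹) • (2 • (innerSL ℝ z))) z := by
      simpa [smul_smul] using h2.const_mul ((1:ℝ)/2)
    apply h3'.congr_of_eventuallyEq
    filter_upwards [eventually_ne_nhds h0] with w hw
    rw [Real.log_pow]
    push_cast; ring
  have h4 : HasFDerivAt Lg (-((((1:ℝ)/2) * (‖z‖^2)⁻¹) • (2 • (innerSL ℝ z)))) z :=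
    h3.const_sub 1
  have h5 : HasFDerivAt (fun w => ((Lg w : ℝ) : ℂ))
      (Complex.ofRealCLM.comp (-((((1:ℝ)/2) * (‖z‖^2)⁻¹) • (2 • (innerSL ℝ z))))) z :=
    Complex.ofRealCLM.hasFDerivAt.comp z h4
  have h6 : HasFDerivAt (fun w => w * ((Lg w : ℝ) : ℂ))
      (z • (Complex.ofRealCLM.comp (-((((1:ℝ)/2) * (‖z‖^2)⁻¹) • (2 • (innerSL ℝ z)))))
        + ((Lg z : ℝ):ℂ) • (ContinuousLinearMap.id ℝ ℂ)) z :=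
    (hasFDerivAt_id z).mul h5
  exact (hasDerivAt_inv hL).comp_hasFDerivAt z h6

lemma algebra_step (L c z : ℂ) (hz : z ≠ 0) (hL : L ≠ 0) (hc : c ≠ 0) :
    (1/2 : ℂ) * (-((z*L)^2)⁻¹ * (z * -(1/2 * (z*c)⁻¹ * (2 * ((z+c)/2))) + L) -
      Complex.I * (-((z*L)^2)⁻¹ * (z * -(1/2 * (z*c)⁻¹ * (2 * (-Complex.I*(z-c)/2))) + L*Complex.I)))
    = -(z^2*L)⁻¹ + (2*z^2*L^2)⁻¹ := by
  have hB : (z * -(1/2 * (z*c)⁻¹ * (2 * ((z+c)/2))) + L) -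
      Complex.I * (z * -(1/2 * (z*c)⁻¹ * (2 * (-Complex.I*(z-c)/2))) + L*Complex.I) = 2*L - 1 := by
    linear_combination (-(c⁻¹*c)) * (mul_inv_cancel₀ hz) + (-1 : ℂ) * (mul_inv_cancel₀ hc) +
      (-(1/2 : ℂ)*z*z⁻¹*c⁻¹*(z-c) - L) * (Complex.I_sq)
  calc (1/2 : ℂ) * (-((z*L)^2)⁻¹ * (z * -(1/2 * (z*c)⁻¹ * (2 * ((z+c)/2))) + L) -
      Complex.I * (-((z*L)^2)⁻¹ * (z * -(1/2 * (z*c)⁻¹ * (2 * (-Complex.I*(z-c)/2))) + L*Complex.I)))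
      = (1/2 : ℂ) * (-((z*L)^2)⁻¹ * ((z * -(1/2 * (z*c)⁻¹ * (2 * ((z+c)/2))) + L) -
          Complex.I * (z * -(1/2 * (z*c)⁻¹ * (2 * (-Complex.I*(z-c)/2))) + L*Complex.I))) := by ring
    _ = (1/2 : ℂ) * (-((z*L)^2)⁻¹ * (2*L - 1)) := by rw [hB]
    _ = -(z^2*L)⁻¹ + (2*z^2*L^2)⁻¹ := by field_simp [hz, hL]; ring

lemma part1 (z : ℂ) (h0 : 0 < ‖z‖) (h1 : ‖z‖ < 1) :
    (1/2 : ℂ) * ((fderiv ℝ fEx z) 1 - Complex.I * (fderiv ℝ fEx z) Complex.I) = gEx z := by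
  have hz : z ≠ 0 := by simpa using h0.ne'
  have hlog : Real.log (‖z‖) < 0 := Real.log_neg h0 h1
  have hLne : Lg z ≠ 0 := by unfold Lg; linarith
  have hL : ((Lg z : ℝ) : ℂ) ≠ 0 := by simpa using hLne
  have hmul : z * ((Lg z : ℝ) : ℂ) ≠ 0 := mul_ne_zero hz hL
  have hc : (starRingEnd ℂ) z ≠ 0 := by simpa using hz
  rw [(hasFDerivAt_fEx z hz hmul).fderiv]
  simp only [ContinuousLinearMap.smul_apply, ContinuousLinearMap.add_apply,
    ContinuousLinearMap.coe_smul', Pi.smul_apply, ContinuousLinearMap.comp_apply,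
    ContinuousLinearMap.neg_apply, ContinuousLinearMap.coe_id', id_eq,
    Complex.ofRealCLM_apply, innerSL_apply_apply, Complex.inner,
    smul_eq_mul]
  simp only [mul_one, Complex.mul_re, Complex.conj_re, Complex.conj_im, Complex.I_re,
    Complex.I_im, mul_zero, zero_mul, sub_zero, zero_sub, mul_neg, neg_neg, smul_eq_mul]
  have e1 : ((‖z‖:ℝ):ℂ)^2 = z * (starRingEnd ℂ) z := by
    rw [Complex.mul_conj]; norm_cast; simp [Complex.normSq_eq_norm_sq]
  have hre : ((z.re:ℝ):ℂ) = (z + (starRingEnd ℂ) z)/2 := by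
    rw [Complex.add_conj]; push_cast; ring
  have him : ((z.im:ℝ):ℂ) = -Complex.I * (z - (starRingEnd ℂ) z)/2 := by
    have := Complex.sub_conj z
    field_simp [this]
    push_cast at this
    linear_combination Complex.I * this + (2*(z.im:ℂ)) * Complex.I_sq
  unfold gEx
  push_cast
  rw [e1, hre, him]
  simp only [nsmul_eq_mul, Nat.cast_ofNat]
  simp only [Complex.one_re, Complex.one_im, Complex.ofReal_one, Complex.ofReal_zero, one_mul,
    zero_mul, neg_zero, sub_zero]
  exact algebra_step ((Lg z : ℝ):ℂ) ((starRingEnd ℂ) z) z hz hL hc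

lemma Lg_gt_one (z : ℂ) (h0 : 0 < ‖z‖) (h1 : ‖z‖ < 1) : 1 < Lg z := by
  have := Real.log_neg h0 h1
  unfold Lg; linarith

lemma gEx_norm_lower (z : ℂ) (h0 : 0 < ‖z‖) (h1 : ‖z‖ < 1) :
    1/(2 * (‖z‖)^2 * Lg z) ≤ ‖gEx z‖ := by
  have hz : z ≠ 0 := by simpa using h0.ne'
  have hLgt : 1 < Lg z := Lg_gt_one z h0 h1
  have hLpos : 0 < Lg z := by linarith
  have hL : ((Lg z:ℝ):ℂ) ≠ 0 := by simpa using hLpos.ne'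
  have hg : gEx z = (((-(Lg z)⁻¹ + (2*(Lg z)^2)⁻¹ : ℝ)):ℂ) * ((z:ℂ)^2)⁻¹ := by
    unfold gEx
    have hz2 : (z:ℂ)^2 ≠ 0 := pow_ne_zero _ hz
    have hL2 : ((Lg z:ℝ):ℂ)^2 ≠ 0 := pow_ne_zero _ hL
    push_cast
    field_simp
  rw [hg, norm_mul, norm_inv, norm_pow, Complex.norm_real]
  set L := Lg z with hLdef
  have key : 1/(2*L) ≤ ‖-L⁻¹ + (2*L^2)⁻¹‖ := by
    rw [Real.norm_eq_abs]
    have e : L⁻¹ - (2*L^2)⁻¹ - (2*L)⁻¹ = (L-1)/(2*L^2) := by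
      field_simp
      ring
    have h1' : (2*L)⁻¹ ≤ L⁻¹ - (2*L^2)⁻¹ := by
      have h0' : 0 ≤ (L-1)/(2*L^2) := div_nonneg (by linarith) (by positivity)
      linarith [e]
    calc 1/(2*L) = (2*L)⁻¹ := one_div _
      _ ≤ L⁻¹ - (2*L^2)⁻¹ := h1'
      _ = -(-L⁻¹ + (2*L^2)⁻¹) := by ring
      _ ≤ |(-L⁻¹ + (2*L^2)⁻¹)| := neg_le_abs _
  calc 1/(2 * (‖z‖)^2 * L) = (1/(2*L)) * ((‖z‖)^2)⁻¹ := by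
        rw [one_div, one_div, mul_inv, mul_inv]; ring
    _ ≤ ‖-L⁻¹ + (2*L^2)⁻¹‖ * ((‖z‖)^2)⁻¹ := by
        gcongr

lemma tsum_top (q : ℝ) (hq : 0 < q) : (∑' n : ℕ, ENNReal.ofReal (q/(n+1))) = ⊤ := by
  by_contra h
  have h1 : Summable (fun n : ℕ => (q/(n+1) : ℝ).toNNReal) := by
    rw [← ENNReal.tsum_coe_ne_top_iff_summable]
    exact h
  have h2 : Summable (fun n : ℕ => (q/(n+1) : ℝ)) := by
    have := NNReal.summable_coe.2 h1
    convert this using 2 with n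
    rw [Real.coe_toNNReal]
    positivity
  have h3 : Summable (fun n : ℕ => ((n:ℝ)+1)⁻¹) := by
    have := h2.mul_left q⁻¹
    convert this using 2 with n
    show ((n:ℝ)+1)⁻¹ = q⁻¹ * (q/(n+1))
    field_simp
    rfl
  have h4 : Summable (fun n : ℕ => ((n:ℝ))⁻¹) := by
    refine (summable_nat_add_iff 1).mp ?_
    simpa using h3
  exact Real.not_summable_natCast_inv h4

lemma step2' (a k : ℝ) (ha : a ≠ 0) (hk : k ≠ 0) :
    (3:ℝ)/(8*k) = (1/(2*a^2*k)) * (3/4*a^2) := by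
  field_simp
  ring

lemma part2 (r : ℝ) (hr0 : 0 < r) (hr1 : r < 1) :
    ∫⁻ z in {z : ℂ | 0 < ‖z‖ ∧ ‖z‖ < r}, ‖gEx z‖₊ = ⊤ := by
  set ρ : ℕ → ℝ := fun n => r / 2 ^ n with hρ
  have hρpos : ∀ n, 0 < ρ n := fun n => by positivity
  have hρanti : ∀ m n, m ≤ n → ρ n ≤ ρ m := by
    intro m n hmn
    apply div_le_div_of_nonneg_left hr0.le (by positivity)
    exact pow_le_pow_right₀ one_le_two hmn
  have hρr : ∀ n, ρ n ≤ r := by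
    intro n
    simpa [hρ] using hρanti 0 n (Nat.zero_le n)
  set A : ℕ → Set ℂ := fun n => Metric.ball (0:ℂ) (ρ n) \ Metric.ball 0 (ρ (n+1)) with hA
  have hmemA : ∀ n z, z ∈ A n ↔ ‖z‖ < ρ n ∧ ρ (n+1) ≤ ‖z‖ := by
    intro n z
    simp [hA, Metric.mem_ball, Complex.dist_eq, not_lt, and_comm]
  have hAmeas : ∀ n, MeasurableSet (A n) :=
    fun n => measurableSet_ball.diff measurableSet_ball
  have hAsub : ∀ n, A n ⊆ {z : ℂ | 0 < ‖z‖ ∧ ‖z‖ < r} := by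
    intro n z hz
    rw [hmemA] at hz
    exact ⟨lt_of_lt_of_le (hρpos (n+1)) hz.2, lt_of_lt_of_le hz.1 (hρr n)⟩
  have hdisj : Pairwise (Function.onFun Disjoint A) := by
    have key : ∀ m n, m < n → Disjoint (A m) (A n) := by
      intro m n hmn
      rw [Set.disjoint_left]
      intro z hzm hzn
      rw [hmemA] at hzm hzn
      have := hρanti (m+1) n hmn
      linarith [hzm.2, hzn.1]
    intro m n hmn
    rcases hmn.lt_or_gt with h | h
    · exact key m n h
    · exact (key n m h).symm
  -- volume lower bound
  have hvol : ∀ n, ENNReal.ofReal (3/4 * ρ n ^ 2) ≤ volume (A n) := by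
    intro n
    have hsub' : Metric.ball (0:ℂ) (ρ (n+1)) ⊆ Metric.ball (0:ℂ) (ρ n) :=
      Metric.ball_subset_ball (hρanti n (n+1) (Nat.le_succ n))
    have hfin : volume (Metric.ball (0:ℂ) (ρ (n+1))) ≠ ⊤ := by
      rw [Complex.volume_ball]
      exact ENNReal.mul_ne_top (by simp [ENNReal.pow_ne_top, ENNReal.ofReal_ne_top]) ENNReal.coe_ne_top
    have : volume (A n) = volume (Metric.ball (0:ℂ) (ρ n)) - volume (Metric.ball (0:ℂ) (ρ (n+1))) :=
      measure_diff hsub' measurableSet_ball.nullMeasurableSet hfin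
    rw [this, Complex.volume_ball, Complex.volume_ball]
    have hsq : ρ (n+1) = ρ n / 2 := by
      simp [hρ, pow_succ]
      ring
    rw [hsq]
    rw [← ENNReal.ofReal_pow (hρpos n).le, ← ENNReal.ofReal_pow (by positivity : (0:ℝ) ≤ ρ n / 2)]
    rw [← ENNReal.sub_mul (fun _ _ => ENNReal.coe_ne_top)]
    rw [← ENNReal.ofReal_sub _ (by positivity)]
    have he : ρ n ^ 2 - (ρ n / 2)^2 = 3/4 * ρ n ^2 := by ring
    rw [he]
    have hpi : (1 : ℝ≥0∞) ≤ (NNReal.pi : ℝ≥0∞) := by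
      rw [ENNReal.one_le_coe_iff, ← NNReal.coe_le_coe, NNReal.coe_real_pi]
      have := Real.pi_gt_three
      norm_num
      linarith
    calc ENNReal.ofReal (3/4 * ρ n ^2) = ENNReal.ofReal (3/4 * ρ n ^2) * 1 := (mul_one _).symm
      _ ≤ ENNReal.ofReal (3/4 * ρ n ^2) * NNReal.pi := by gcongr
  -- constants
  set K : ℕ → ℝ := fun n => 1 - Real.log (ρ (n+1)) with hK
  set C : ℝ := (1 - Real.log r) + Real.log 2 with hC
  have hlogr : Real.log r < 0 := Real.log_neg hr0 hr1
  have hlog2 : 0 < Real.log 2 := Real.log_pos one_lt_two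
  have hCpos : 0 < C := by rw [hC]; linarith
  set q : ℝ := 3/(8*C) with hq
  have hqpos : 0 < q := by positivity
  have hρlt1 : ∀ n, ρ n < 1 := fun n => lt_of_le_of_lt (hρr n) hr1
  have hKpos : ∀ n, 1 < K n := by
    intro n
    have := Real.log_neg (hρpos (n+1)) (hρlt1 (n+1))
    rw [hK]; simp only []; linarith
  have hKle : ∀ n, K n ≤ C*(n+1) := by
    intro n
    have he : Real.log (ρ (n+1)) = Real.log r - (n+1)*Real.log 2 := by
      rw [hρ]
      simp only []
      rw [Real.log_div hr0.ne' (by positivity), Real.log_pow]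
      push_cast
      ring
    rw [hK, hC]
    simp only [he]
    nlinarith [mul_nonneg (Nat.cast_nonneg (α:=ℝ) n) (by linarith : (0:ℝ) ≤ 1 - Real.log r)]
  have hbound : ∀ n, ∀ z ∈ A n,
      ENNReal.ofReal (1/(2*ρ n^2*K n)) ≤ (‖gEx z‖₊ : ℝ≥0∞) := by
    intro n z hz
    rw [hmemA] at hz
    have h0z : 0 < ‖z‖ := lt_of_lt_of_le (hρpos (n+1)) hz.2
    have h1z : ‖z‖ < 1 := lt_of_lt_of_le hz.1 (hρr n) |>.trans hr1
    have hLz : 1 < Lg z := Lg_gt_one z h0z h1z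
    have hreal : 1/(2*ρ n^2*K n) ≤ 1/(2 * (‖z‖)^2 * Lg z) := by
      have hzρ : (‖z‖)^2 ≤ ρ n ^2 :=
        pow_le_pow_left₀ (norm_nonneg z) hz.1.le 2
      have hLK : Lg z ≤ K n := by
        rw [hK]
        unfold Lg
        simp only []
        have := Real.log_le_log (hρpos (n+1)) hz.2
        linarith
      apply one_div_le_one_div_of_le
      · exact mul_pos (mul_pos two_pos (pow_pos h0z 2)) (by linarith)
      · exact mul_le_mul (mul_le_mul_of_nonneg_left hzρ (by norm_num)) hLK
          (by linarith) (by positivity)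
    calc ENNReal.ofReal (1/(2*ρ n^2*K n)) ≤ ENNReal.ofReal (1/(2 * (‖z‖)^2 * Lg z)) :=
          ENNReal.ofReal_le_ofReal hreal
      _ ≤ ENNReal.ofReal ‖gEx z‖ := ENNReal.ofReal_le_ofReal (gEx_norm_lower z h0z h1z)
      _ = (‖gEx z‖₊ : ℝ≥0∞) := ofReal_norm _
  have hterm : ∀ n : ℕ, ENNReal.ofReal (q/(n+1)) ≤ ∫⁻ z in A n, ‖gEx z‖₊ := by
    intro n
    have step1 : q/(n+1) ≤ 3/(8*K n) := by
      rw [hq]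
      rw [div_div]
      have hK8 : (0:ℝ) < 8 * K n := by linarith [hKpos n]
      apply div_le_div_of_nonneg_left (by norm_num) hK8
      have := hKle n
      nlinarith
    have step2 : (3:ℝ)/(8*K n) = (1/(2*ρ n^2*K n)) * (3/4*ρ n^2) :=
      step2' (ρ n) (K n) (hρpos n).ne' (ne_of_gt (by linarith [hKpos n]))
    calc ENNReal.ofReal (q/(n+1)) ≤ ENNReal.ofReal (3/(8*K n)) := ENNReal.ofReal_le_ofReal step1
      _ = ENNReal.ofReal ((1/(2*ρ n^2*K n)) * (3/4*ρ n^2)) := by rw [← step2]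
      _ = ENNReal.ofReal (1/(2*ρ n^2*K n)) * ENNReal.ofReal (3/4*ρ n^2) :=
          ENNReal.ofReal_mul (le_of_lt (div_pos one_pos
            (mul_pos (mul_pos two_pos (pow_pos (hρpos n) 2)) (by linarith [hKpos n]))))
      _ ≤ ENNReal.ofReal (1/(2*ρ n^2*K n)) * volume (A n) := by gcongr; exact hvol n
      _ = ∫⁻ _ in A n, ENNReal.ofReal (1/(2*ρ n^2*K n)) := (setLIntegral_const _ _).symm
      _ ≤ ∫⁻ z in A n, ‖gEx z‖₊ := setLIntegral_mono' (hAmeas n) (hbound n)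
  have htop : (⊤:ℝ≥0∞) ≤ ∫⁻ z in {z : ℂ | 0 < ‖z‖ ∧ ‖z‖ < r}, ‖gEx z‖₊ := by
    calc (⊤:ℝ≥0∞) = ∑' n : ℕ, ENNReal.ofReal (q/(n+1)) := (tsum_top q hqpos).symm
      _ ≤ ∑' n : ℕ, ∫⁻ z in A n, ‖gEx z‖₊ := ENNReal.tsum_le_tsum hterm
      _ = ∫⁻ z in ⋃ n, A n, ‖gEx z‖₊ := (lintegral_iUnion hAmeas hdisj _).symm
      _ ≤ ∫⁻ z in {z : ℂ | 0 < ‖z‖ ∧ ‖z‖ < r}, ‖gEx z‖₊ :=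
          lintegral_mono_set (Set.iUnion_subset hAsub)
  exact top_le_iff.mp htop

/-- `g = ∂f/∂z` on the punctured unit disc, where
`f(z) = 1/(z log(e/|z|))`, and `g` is not Lebesgue integrable on any punctured
neighbourhood of the origin. -/
theorem statement14 :
    (∀ z : ℂ, 0 < ‖z‖ → ‖z‖ < 1 →
      (1/2 : ℂ) * ((fderiv ℝ fEx z) 1 - Complex.I * (fderiv ℝ fEx z) Complex.I) = gEx z) ∧
    ∀ r : ℝ, 0 < r → r < 1 →
      ∫⁻ z in {z : ℂ | 0 < ‖z‖ ∧ ‖z‖ < r}, ‖gEx z‖₊ = ⊤ :=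
  ⟨part1, part2⟩
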